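/- The function x ↦ h(4x−1) − h(2x−1) − h(x) tends to 0 as x → ∞. -/

import Mathlib

set_option maxHeartbeats 2000000

lemma fib_le_pow : ∀ n : ℕ, (Nat.fib n : ℝ) ≤ (7/4)^n := by
  intro n
  induction n using Nat.twoStepInduction with
  | zero => norm_num
  | one => norm_num
  | more k ih1 ih2 =>
    rw [Nat.fib_add_two]
    push_cast
    have h : ((7:ℝ)/4)^(k+2) = (7/4)^k * (49/16) := by ring
    have h2 : ((7:ℝ)/4)^(k+1) = (7/4)^k * (7/4) := by ring
    rw [h]
    nlinarith [ih1, ih2, pow_nonneg (by norm_num : (0:ℝ) ≤ 7/4) k]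

lemma case_uu (P e x f m Q : ℝ) (he : e = 1 ∨ e = -1) (hP : 16 ≤ P)
    (hm0 : 0 ≤ m) (hmf : m ≤ f) (hfQ : f ≤ Q)
    (hx1 : (P - e)/3 ≤ x) (hx2 : x ≤ (2*P + e)/3)
    : |((-36)*x*P*e*f + (36)*x*P*e*m + (-72)*x*e*e*f + (-36)*x*e*e*m + (18)*P*P*e*f + (-18)*P*P*e*m + (6)*P*P*f + (-6)*P*P*m + (36)*P*e*e*f + (18)*P*e*e*m + (24)*P*e*f + (-6)*P*e*m + (24)*e*e*f + (12)*e*e*m)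
      / ((P+2*e)*((2*P-2*e)*(4*P+2*e)))| ≤ 10000*Q/P := by
  have hP0 : (0:ℝ) < P := by linarith
  have hf0 : (0:ℝ) ≤ f := le_trans hm0 hmf
  have hQ0 : (0:ℝ) ≤ Q := le_trans hf0 hfQ
  have hmQ : m ≤ Q := le_trans hmf hfQ
  have hx0 : (0:ℝ) ≤ x := by rcases he with rfl | rfl <;> linarith
  have hxP : x ≤ P := by rcases he with rfl | rfl <;> linarith
  have hD : (0:ℝ) < (P+2*e)*((2*P-2*e)*(4*P+2*e)) := by
    rcases he with rfl | rfl <;>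
      exact mul_pos (by linarith) (mul_pos (by linarith) (by linarith))
  have b1 : x*f ≤ P*Q := mul_le_mul hxP hfQ hf0 hP0.le
  have b2 : x*m ≤ P*Q := mul_le_mul hxP hmQ hm0 hP0.le
  have pf : (0:ℝ) ≤ P*f := mul_nonneg hP0.le hf0
  have pm : (0:ℝ) ≤ P*m := mul_nonneg hP0.le hm0
  have ppf : (0:ℝ) ≤ P*P*f := mul_nonneg (mul_nonneg hP0.le hP0.le) hf0
  have ppm : (0:ℝ) ≤ P*P*m := mul_nonneg (mul_nonneg hP0.le hP0.le) hm0
  have pppf : (0:ℝ) ≤ P*P*P*f := mul_nonneg (mul_nonneg (mul_nonneg hP0.le hP0.le) hP0.le) hf0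
  have pppm : (0:ℝ) ≤ P*P*P*m := mul_nonneg (mul_nonneg (mul_nonneg hP0.le hP0.le) hP0.le) hm0
  have xf : (0:ℝ) ≤ x*f := mul_nonneg hx0 hf0
  have xm : (0:ℝ) ≤ x*m := mul_nonneg hx0 hm0
  rw [abs_le]
  constructor
  · rw [← neg_div, div_le_div_iff₀ hP0 hD]
    rcases he with rfl | rfl <;>
      nlinarith [b1, b2, pf, pm, ppf, ppm, pppf, pppm, xf, xm, hQ0, sq_nonneg P, hP0.le,
        mul_nonneg hQ0 hP0.le, mul_nonneg (mul_nonneg hQ0 hP0.le) hP0.le]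
  · rw [div_le_div_iff₀ hD hP0]
    rcases he with rfl | rfl <;>
      nlinarith [b1, b2, pf, pm, ppf, ppm, pppf, pppm, xf, xm, hQ0, sq_nonneg P, hP0.le,
        mul_nonneg hQ0 hP0.le, mul_nonneg (mul_nonneg hQ0 hP0.le) hP0.le]

lemma case_ul (P e x f m Q : ℝ) (he : e = 1 ∨ e = -1) (hP : 16 ≤ P)
    (hm0 : 0 ≤ m) (hmf : m ≤ f) (hfQ : f ≤ Q)
    (hx1 : (P - e)/3 ≤ x) (hx2 : x ≤ (2*P + e)/3)
    (hs2 : 2*x - 1 ≤ (2*P+e)/3)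
    : |((12)*x*P*P*f + (-24)*x*P*P*m + (48)*x*P*e*f + (-42)*x*P*e*m + (48)*x*e*e*f + (12)*x*e*e*m + (-4)*P*P*P*f + (8)*P*P*P*m + (-15)*P*P*e*f + (15)*P*P*e*m + (-3)*P*P*f + (9)*P*P*m + (-12)*P*e*e*f + (-12)*P*e*f + (18)*P*e*m + (4)*e*e*e*f + (4)*e*e*e*m + (-12)*e*e*f)
      / ((P+2*e)*((P+2*e)*(4*P+2*e)))| ≤ 10000*Q/P := by
  have hP0 : (0:ℝ) < P := by linarith
  have hf0 : (0:ℝ) ≤ f := le_trans hm0 hmf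
  have hQ0 : (0:ℝ) ≤ Q := le_trans hf0 hfQ
  have hmQ : m ≤ Q := le_trans hmf hfQ
  have hx0 : (0:ℝ) ≤ x := by rcases he with rfl | rfl <;> linarith
  have hxP : x ≤ P := by rcases he with rfl | rfl <;> linarith
  have hD : (0:ℝ) < (P+2*e)*((P+2*e)*(4*P+2*e)) := by
    rcases he with rfl | rfl <;>
      exact mul_pos (by linarith) (mul_pos (by linarith) (by linarith))
  have b1 : x*f ≤ P*Q := mul_le_mul hxP hfQ hf0 hP0.le
  have b2 : x*m ≤ P*Q := mul_le_mul hxP hmQ hm0 hP0.le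
  have pf : (0:ℝ) ≤ P*f := mul_nonneg hP0.le hf0
  have pm : (0:ℝ) ≤ P*m := mul_nonneg hP0.le hm0
  have ppf : (0:ℝ) ≤ P*P*f := mul_nonneg (mul_nonneg hP0.le hP0.le) hf0
  have ppm : (0:ℝ) ≤ P*P*m := mul_nonneg (mul_nonneg hP0.le hP0.le) hm0
  have pppf : (0:ℝ) ≤ P*P*P*f := mul_nonneg (mul_nonneg (mul_nonneg hP0.le hP0.le) hP0.le) hf0
  have pppm : (0:ℝ) ≤ P*P*P*m := mul_nonneg (mul_nonneg (mul_nonneg hP0.le hP0.le) hP0.le) hm0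
  have xf : (0:ℝ) ≤ x*f := mul_nonneg hx0 hf0
  have xm : (0:ℝ) ≤ x*m := mul_nonneg hx0 hm0
  rw [abs_le]
  constructor
  · rw [← neg_div, div_le_div_iff₀ hP0 hD]
    rcases he with rfl | rfl <;>
      nlinarith [b1, b2, pf, pm, ppf, ppm, pppf, pppm, xf, xm, hQ0, sq_nonneg P, hP0.le,
        mul_nonneg hQ0 hP0.le, mul_nonneg (mul_nonneg hQ0 hP0.le) hP0.le]
  · rw [div_le_div_iff₀ hD hP0]
    rcases he with rfl | rfl <;>
      nlinarith [b1, b2, pf, pm, ppf, ppm, pppf, pppm, xf, xm, hQ0, sq_nonneg P, hP0.le,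
        mul_nonneg hQ0 hP0.le, mul_nonneg (mul_nonneg hQ0 hP0.le) hP0.le]

lemma case_lu (P e x f m Q : ℝ) (he : e = 1 ∨ e = -1) (hP : 16 ≤ P)
    (hm0 : 0 ≤ m) (hmf : m ≤ f) (hfQ : f ≤ Q)
    (hx1 : (P - e)/3 ≤ x) (hx2 : x ≤ (2*P + e)/3)
    (hs4 : 4*x - 1 ≤ (4*P-e)/3)
    : |((12)*x*P*P*f + (-12)*x*P*P*m + (12)*x*P*e*f + (24)*x*P*e*m + (-24)*x*e*e*f + (-12)*x*e*e*m + (-4)*P*P*P*f + (4)*P*P*P*m + (-12)*P*P*e*m + (12)*P*e*e*f + (12)*P*e*e*m + (-8)*e*e*e*f + (-4)*e*e*e*m)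
      / ((P+2*e)*((2*P-2*e)*(2*P-2*e)))| ≤ 10000*Q/P := by
  have hP0 : (0:ℝ) < P := by linarith
  have hf0 : (0:ℝ) ≤ f := le_trans hm0 hmf
  have hQ0 : (0:ℝ) ≤ Q := le_trans hf0 hfQ
  have hmQ : m ≤ Q := le_trans hmf hfQ
  have hx0 : (0:ℝ) ≤ x := by rcases he with rfl | rfl <;> linarith
  have hxP : x ≤ P := by rcases he with rfl | rfl <;> linarith
  have hD : (0:ℝ) < (P+2*e)*((2*P-2*e)*(2*P-2*e)) := by
    rcases he with rfl | rfl <;>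
      exact mul_pos (by linarith) (mul_pos (by linarith) (by linarith))
  have b1 : x*f ≤ P*Q := mul_le_mul hxP hfQ hf0 hP0.le
  have b2 : x*m ≤ P*Q := mul_le_mul hxP hmQ hm0 hP0.le
  have pf : (0:ℝ) ≤ P*f := mul_nonneg hP0.le hf0
  have pm : (0:ℝ) ≤ P*m := mul_nonneg hP0.le hm0
  have ppf : (0:ℝ) ≤ P*P*f := mul_nonneg (mul_nonneg hP0.le hP0.le) hf0
  have ppm : (0:ℝ) ≤ P*P*m := mul_nonneg (mul_nonneg hP0.le hP0.le) hm0
  have pppf : (0:ℝ) ≤ P*P*P*f := mul_nonneg (mul_nonneg (mul_nonneg hP0.le hP0.le) hP0.le) hf0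
  have pppm : (0:ℝ) ≤ P*P*P*m := mul_nonneg (mul_nonneg (mul_nonneg hP0.le hP0.le) hP0.le) hm0
  have xf : (0:ℝ) ≤ x*f := mul_nonneg hx0 hf0
  have xm : (0:ℝ) ≤ x*m := mul_nonneg hx0 hm0
  rw [abs_le]
  constructor
  · rw [← neg_div, div_le_div_iff₀ hP0 hD]
    rcases he with rfl | rfl <;>
      nlinarith [b1, b2, pf, pm, ppf, ppm, pppf, pppm, xf, xm, hQ0, sq_nonneg P, hP0.le,
        mul_nonneg hQ0 hP0.le, mul_nonneg (mul_nonneg hQ0 hP0.le) hP0.le]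
  · rw [div_le_div_iff₀ hD hP0]
    rcases he with rfl | rfl <;>
      nlinarith [b1, b2, pf, pm, ppf, ppm, pppf, pppm, xf, xm, hQ0, sq_nonneg P, hP0.le,
        mul_nonneg hQ0 hP0.le, mul_nonneg (mul_nonneg hQ0 hP0.le) hP0.le]

lemma case_ll (P e x f m Q : ℝ) (he : e = 1 ∨ e = -1) (hP : 16 ≤ P)
    (hm0 : 0 ≤ m) (hmf : m ≤ f) (hfQ : f ≤ Q)
    (hx1 : (P - e)/3 ≤ x) (hx2 : x ≤ (2*P + e)/3)
    (hs2 : 2*x - 1 ≤ (2*P+e)/3) (hs4 : 4*x - 1 ≤ (4*P-e)/3)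
    : |((12)*x*P*P*f + (-18)*x*P*P*m + (48)*x*P*e*f + (-18)*x*P*e*m + (48)*x*e*e*f + (36)*x*e*e*m + (-4)*P*P*P*f + (6)*P*P*P*m + (-15)*P*P*e*f + (6)*P*P*e*m + (-3)*P*P*f + (6)*P*P*m + (-12)*P*e*e*f + (-12)*P*e*e*m + (-12)*P*e*f + (6)*P*e*m + (4)*e*e*e*f + (-12)*e*e*f + (-12)*e*e*m)
      / ((2*P-2*e)*((P+2*e)*(P+2*e)))| ≤ 10000*Q/P := by
  have hP0 : (0:ℝ) < P := by linarith
  have hf0 : (0:ℝ) ≤ f := le_trans hm0 hmf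
  have hQ0 : (0:ℝ) ≤ Q := le_trans hf0 hfQ
  have hmQ : m ≤ Q := le_trans hmf hfQ
  have hx0 : (0:ℝ) ≤ x := by rcases he with rfl | rfl <;> linarith
  have hxP : x ≤ P := by rcases he with rfl | rfl <;> linarith
  have hD : (0:ℝ) < (2*P-2*e)*((P+2*e)*(P+2*e)) := by
    rcases he with rfl | rfl <;>
      exact mul_pos (by linarith) (mul_pos (by linarith) (by linarith))
  have b1 : x*f ≤ P*Q := mul_le_mul hxP hfQ hf0 hP0.le
  have b2 : x*m ≤ P*Q := mul_le_mul hxP hmQ hm0 hP0.le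
  have pf : (0:ℝ) ≤ P*f := mul_nonneg hP0.le hf0
  have pm : (0:ℝ) ≤ P*m := mul_nonneg hP0.le hm0
  have ppf : (0:ℝ) ≤ P*P*f := mul_nonneg (mul_nonneg hP0.le hP0.le) hf0
  have ppm : (0:ℝ) ≤ P*P*m := mul_nonneg (mul_nonneg hP0.le hP0.le) hm0
  have pppf : (0:ℝ) ≤ P*P*P*f := mul_nonneg (mul_nonneg (mul_nonneg hP0.le hP0.le) hP0.le) hf0
  have pppm : (0:ℝ) ≤ P*P*P*m := mul_nonneg (mul_nonneg (mul_nonneg hP0.le hP0.le) hP0.le) hm0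
  have xf : (0:ℝ) ≤ x*f := mul_nonneg hx0 hf0
  have xm : (0:ℝ) ≤ x*m := mul_nonneg hx0 hm0
  rw [abs_le]
  constructor
  · rw [← neg_div, div_le_div_iff₀ hP0 hD]
    rcases he with rfl | rfl <;>
      nlinarith [b1, b2, pf, pm, ppf, ppm, pppf, pppm, xf, xm, hQ0, sq_nonneg P, hP0.le,
        mul_nonneg hQ0 hP0.le, mul_nonneg (mul_nonneg hQ0 hP0.le) hP0.le]
  · rw [div_le_div_iff₀ hD hP0]
    rcases he with rfl | rfl <;>
      nlinarith [b1, b2, pf, pm, ppf, ppm, pppf, pppm, xf, xm, hQ0, sq_nonneg P, hP0.le,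
        mul_nonneg hQ0 hP0.le, mul_nonneg (mul_nonneg hQ0 hP0.le) hP0.le]

/-- `h(4x-1) - h(2x-1) - h(x) → 0` as `x → ∞`. -/
theorem tendsto_h_diff_minus
    (M : ℕ → ℝ) (hM : ∀ n : ℕ, M n = (2 ^ n - (-1) ^ n) / 3)
    (h : ℝ → ℝ)
    (h01 : ∀ x ∈ Set.Icc (0 : ℝ) 1, h x = x)
    (hlin : ∀ n : ℕ, 2 ≤ n → ∀ x ∈ Set.Icc (M n) (M (n + 1)),
      h x = (Nat.fib n : ℝ) +
        ((Nat.fib (n + 1) : ℝ) - (Nat.fib n : ℝ)) * (x - M n) / (M (n + 1) - M n)) :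
    Filter.Tendsto (fun x : ℝ => h (4 * x - 1) - h (2 * x - 1) - h x)
      Filter.atTop (nhds 0) := by
  classical
  have key : ∀ n : ℕ, 4 ≤ n → ∀ x : ℝ, M n ≤ x → x ≤ M (n+1) →
      |h (4*x-1) - h (2*x-1) - h x| ≤ 10000 * (((7:ℝ)/4)^n / (2:ℝ)^n) := by
    intro n hn x hx1 hx2
    have he : ((-1:ℝ))^n = 1 ∨ ((-1:ℝ))^n = -1 := neg_one_pow_eq_or ℝ n
    have hE1 : (-1:ℝ) ≤ (-1:ℝ)^n := by rcases he with h' | h' <;> rw [h'] <;> norm_num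
    have hE2 : ((-1:ℝ))^n ≤ 1 := by rcases he with h' | h' <;> rw [h'] <;> norm_num
    have hP : (16:ℝ) ≤ (2:ℝ)^n := by
      calc (16:ℝ) = 2^4 := by norm_num
        _ ≤ 2^n := pow_le_pow_right₀ (by norm_num) hn
    have hMn : M n = ((2:ℝ)^n - (-1)^n)/3 := hM n
    have hM1 : M (n+1) = (2*(2:ℝ)^n + (-1)^n)/3 := by
      rw [hM]; rw [pow_succ, pow_succ]; ring
    have hM2 : M (n+2) = (4*(2:ℝ)^n - (-1)^n)/3 := by
      rw [hM]; rw [pow_succ, pow_succ, pow_succ, pow_succ]; ring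
    have hM3 : M (n+3) = (8*(2:ℝ)^n + (-1)^n)/3 := by
      rw [hM]; rw [pow_succ, pow_succ, pow_succ, pow_succ, pow_succ, pow_succ]; ring
    have hd1 : M (n+1) - M n = ((2:ℝ)^n + 2*(-1)^n)/3 := by rw [hM1, hMn]; ring
    have hd2 : M (n+2) - M (n+1) = (2*(2:ℝ)^n - 2*(-1)^n)/3 := by rw [hM2, hM1]; ring
    have hd3 : M (n+3) - M (n+2) = (4*(2:ℝ)^n + 2*(-1)^n)/3 := by rw [hM3, hM2]; ring
    have hne1 : ((2:ℝ)^n + 2*(-1)^n) ≠ 0 := ne_of_gt (by linarith)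
    have hne2 : (2*(2:ℝ)^n - 2*(-1)^n) ≠ 0 := ne_of_gt (by linarith)
    have hne3 : (4*(2:ℝ)^n + 2*(-1)^n) ≠ 0 := ne_of_gt (by linarith)
    have hne2' : ((2:ℝ)^n - (-1)^n) ≠ 0 := ne_of_gt (by linarith)
    have hne2'' : (-(-1:ℝ)^n + (2:ℝ)^n) ≠ 0 := ne_of_gt (by linarith)
    have hf1 : (Nat.fib (n+1) : ℝ) = (Nat.fib n : ℝ) + (Nat.fib (n-1) : ℝ) := by
      have h2' : n - 1 + 2 = n + 1 := by omega
      have h1' : n - 1 + 1 = n := by omega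
      rw [← h2', Nat.fib_add_two, h1']
      push_cast; ring
    have hf2 : (Nat.fib (n+2) : ℝ) = 2*(Nat.fib n : ℝ) + (Nat.fib (n-1) : ℝ) := by
      have h' : (Nat.fib (n+2) : ℝ) = (Nat.fib n : ℝ) + (Nat.fib (n+1) : ℝ) := by
        rw [Nat.fib_add_two]; push_cast; ring
      rw [h', hf1]; ring
    have hf3 : (Nat.fib (n+3) : ℝ) = 3*(Nat.fib n : ℝ) + 2*(Nat.fib (n-1) : ℝ) := by
      have h'' : n + 3 = (n+1) + 2 := by omega
      have h' : (Nat.fib (n+3) : ℝ) = (Nat.fib (n+1) : ℝ) + (Nat.fib (n+2) : ℝ) := by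
        rw [h'', Nat.fib_add_two]; push_cast; ring
      rw [h', hf2, hf1]; ring
    have hm0 : (0:ℝ) ≤ (Nat.fib (n-1) : ℝ) := Nat.cast_nonneg _
    have hmf : (Nat.fib (n-1) : ℝ) ≤ (Nat.fib n : ℝ) :=
      Nat.cast_le.mpr (Nat.fib_mono (by omega))
    have hfQ : (Nat.fib n : ℝ) ≤ ((7:ℝ)/4)^n := fib_le_pow n
    have hhx : h x = (Nat.fib n : ℝ) +
        ((Nat.fib (n+1) : ℝ) - (Nat.fib n : ℝ)) * (x - M n) / (M (n+1) - M n) :=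
      hlin n (by omega) x ⟨hx1, hx2⟩
    by_cases c2 : M (n+1) ≤ 2*x - 1
    · by_cases c4 : M (n+2) ≤ 4*x - 1
      have hhx2 : h (2*x-1) = (Nat.fib (n+1) : ℝ) +
          ((Nat.fib (n+2) : ℝ) - (Nat.fib (n+1) : ℝ)) * ((2*x-1) - M (n+1)) / (M (n+2) - M (n+1)) :=
        hlin (n+1) (by omega) _ ⟨c2, by linarith⟩
      have hhx4 : h (4*x-1) = (Nat.fib (n+2) : ℝ) +
          ((Nat.fib (n+3) : ℝ) - (Nat.fib (n+2) : ℝ)) * ((4*x-1) - M (n+2)) / (M (n+3) - M (n+2)) :=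
        hlin (n+2) (by omega) _ ⟨c4, by linarith⟩
      have hA : h (4*x-1) - h (2*x-1) - h x = ((-36)*x*(2:ℝ)^n*(-1:ℝ)^n*(Nat.fib n : ℝ) + (36)*x*(2:ℝ)^n*(-1:ℝ)^n*(Nat.fib (n-1) : ℝ) + (-72)*x*(-1:ℝ)^n*(-1:ℝ)^n*(Nat.fib n : ℝ) + (-36)*x*(-1:ℝ)^n*(-1:ℝ)^n*(Nat.fib (n-1) : ℝ) + (18)*(2:ℝ)^n*(2:ℝ)^n*(-1:ℝ)^n*(Nat.fib n : ℝ) + (-18)*(2:ℝ)^n*(2:ℝ)^n*(-1:ℝ)^n*(Nat.fib (n-1) : ℝ) + (6)*(2:ℝ)^n*(2:ℝ)^n*(Nat.fib n : ℝ) + (-6)*(2:ℝ)^n*(2:ℝ)^n*(Nat.fib (n-1) : ℝ) + (36)*(2:ℝ)^n*(-1:ℝ)^n*(-1:ℝ)^n*(Nat.fib n : ℝ) + (18)*(2:ℝ)^n*(-1:ℝ)^n*(-1:ℝ)^n*(Nat.fib (n-1) : ℝ) + (24)*(2:ℝ)^n*(-1:ℝ)^n*(Nat.fib n : ℝ) +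 (-6)*(2:ℝ)^n*(-1:ℝ)^n*(Nat.fib (n-1) : ℝ) + (24)*(-1:ℝ)^n*(-1:ℝ)^n*(Nat.fib n : ℝ) + (12)*(-1:ℝ)^n*(-1:ℝ)^n*(Nat.fib (n-1) : ℝ))
          / (((2:ℝ)^n+2*(-1:ℝ)^n)*((2*(2:ℝ)^n-2*(-1:ℝ)^n)*(4*(2:ℝ)^n+2*(-1:ℝ)^n))) := by
        rw [hhx4, hhx2, hhx, hd3, hd2, hd1, hf3, hf2, hf1, hM2, hM1, hMn]
        field_simp
        ring
      rw [hA]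
      refine le_trans (case_uu ((2:ℝ)^n) ((-1:ℝ)^n) x ((Nat.fib n : ℝ)) ((Nat.fib (n-1) : ℝ))
        (((7:ℝ)/4)^n) he hP hm0 hmf hfQ (by linarith) (by linarith)) (le_of_eq (by ring))

      have hhx2 : h (2*x-1) = (Nat.fib (n+1) : ℝ) +
          ((Nat.fib (n+2) : ℝ) - (Nat.fib (n+1) : ℝ)) * ((2*x-1) - M (n+1)) / (M (n+2) - M (n+1)) :=
        hlin (n+1) (by omega) _ ⟨c2, by linarith⟩
      have c4' : 4*x-1 ≤ M (n+2) := le_of_lt (not_le.mp c4)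
      have hhx4 : h (4*x-1) = (Nat.fib (n+1) : ℝ) +
          ((Nat.fib (n+2) : ℝ) - (Nat.fib (n+1) : ℝ)) * ((4*x-1) - M (n+1)) / (M (n+2) - M (n+1)) :=
        hlin (n+1) (by omega) _ ⟨by linarith, c4'⟩
      have hA : h (4*x-1) - h (2*x-1) - h x = ((12)*x*(2:ℝ)^n*(2:ℝ)^n*(Nat.fib n : ℝ) + (-12)*x*(2:ℝ)^n*(2:ℝ)^n*(Nat.fib (n-1) : ℝ) + (12)*x*(2:ℝ)^n*(-1:ℝ)^n*(Nat.fib n : ℝ) + (24)*x*(2:ℝ)^n*(-1:ℝ)^n*(Nat.fib (n-1) : ℝ) + (-24)*x*(-1:ℝ)^n*(-1:ℝ)^n*(Nat.fib n : ℝ) + (-12)*x*(-1:ℝ)^n*(-1:ℝ)^n*(Nat.fib (n-1) : ℝ) + (-4)*(2:ℝ)^n*(2:ℝ)^n*(2:ℝ)^n*(Nat.fib n : ℝ) + (4)*(2:ℝ)^n*(2:ℝ)^n*(2:ℝ)^n*(Nat.fib (n-1) : ℝ) + (-12)*(2:ℝ)^n*(2:ℝ)^n*(-1:ℝ)^n*(Nat.fib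 (n-1) : ℝ) + (12)*(2:ℝ)^n*(-1:ℝ)^n*(-1:ℝ)^n*(Nat.fib n : ℝ) + (12)*(2:ℝ)^n*(-1:ℝ)^n*(-1:ℝ)^n*(Nat.fib (n-1) : ℝ) + (-8)*(-1:ℝ)^n*(-1:ℝ)^n*(-1:ℝ)^n*(Nat.fib n : ℝ) + (-4)*(-1:ℝ)^n*(-1:ℝ)^n*(-1:ℝ)^n*(Nat.fib (n-1) : ℝ))
          / (((2:ℝ)^n+2*(-1:ℝ)^n)*((2*(2:ℝ)^n-2*(-1:ℝ)^n)*(2*(2:ℝ)^n-2*(-1:ℝ)^n))) := by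
        rw [hhx4, hhx2, hhx, hd2, hd1, hf2, hf1, hM1, hMn]
        field_simp
        ring
      rw [hA]
      refine le_trans (case_lu ((2:ℝ)^n) ((-1:ℝ)^n) x ((Nat.fib n : ℝ)) ((Nat.fib (n-1) : ℝ))
        (((7:ℝ)/4)^n) he hP hm0 hmf hfQ (by linarith) (by linarith) (by linarith)) (le_of_eq (by ring))

    · by_cases c4 : M (n+2) ≤ 4*x - 1
      have c2' : 2*x-1 ≤ M (n+1) := le_of_lt (not_le.mp c2)
      have hhx2 : h (2*x-1) = (Nat.fib n : ℝ) +
          ((Nat.fib (n+1) : ℝ) - (Nat.fib n : ℝ)) * ((2*x-1) - M n) / (M (n+1) - M n) :=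
        hlin n (by omega) _ ⟨by linarith, c2'⟩
      have hhx4 : h (4*x-1) = (Nat.fib (n+2) : ℝ) +
          ((Nat.fib (n+3) : ℝ) - (Nat.fib (n+2) : ℝ)) * ((4*x-1) - M (n+2)) / (M (n+3) - M (n+2)) :=
        hlin (n+2) (by omega) _ ⟨c4, by linarith⟩
      have hA : h (4*x-1) - h (2*x-1) - h x = ((12)*x*(2:ℝ)^n*(2:ℝ)^n*(Nat.fib n : ℝ) + (-24)*x*(2:ℝ)^n*(2:ℝ)^n*(Nat.fib (n-1) : ℝ) + (48)*x*(2:ℝ)^n*(-1:ℝ)^n*(Nat.fib n : ℝ) + (-42)*x*(2:ℝ)^n*(-1:ℝ)^n*(Nat.fib (n-1) : ℝ) + (48)*x*(-1:ℝ)^n*(-1:ℝ)^n*(Nat.fib n : ℝ) + (12)*x*(-1:ℝ)^n*(-1:ℝ)^n*(Nat.fib (n-1) : ℝ) + (-4)*(2:ℝ)^n*(2:ℝ)^n*(2:ℝ)^n*(Nat.fib n : ℝ) + (8)*(2:ℝ)^n*(2:ℝ)^n*(2:ℝ)^n*(Nat.fib (n-1) : ℝ) + (-15)*(2:ℝ)^n*(2:ℝ)^n*(-1:ℝ)^n*(Nat.fib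 n : ℝ) + (15)*(2:ℝ)^n*(2:ℝ)^n*(-1:ℝ)^n*(Nat.fib (n-1) : ℝ) + (-3)*(2:ℝ)^n*(2:ℝ)^n*(Nat.fib n : ℝ) + (9)*(2:ℝ)^n*(2:ℝ)^n*(Nat.fib (n-1) : ℝ) + (-12)*(2:ℝ)^n*(-1:ℝ)^n*(-1:ℝ)^n*(Nat.fib n : ℝ) + (-12)*(2:ℝ)^n*(-1:ℝ)^n*(Nat.fib n : ℝ) + (18)*(2:ℝ)^n*(-1:ℝ)^n*(Nat.fib (n-1) : ℝ) + (4)*(-1:ℝ)^n*(-1:ℝ)^n*(-1:ℝ)^n*(Nat.fib n : ℝ) + (4)*(-1:ℝ)^n*(-1:ℝ)^n*(-1:ℝ)^n*(Nat.fib (n-1) : ℝ) + (-12)*(-1:ℝ)^n*(-1:ℝ)^n*(Nat.fib n : ℝ))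
          / (((2:ℝ)^n+2*(-1:ℝ)^n)*(((2:ℝ)^n+2*(-1:ℝ)^n)*(4*(2:ℝ)^n+2*(-1:ℝ)^n))) := by
        rw [hhx4, hhx2, hhx, hd3, hd1, hf3, hf2, hf1, hM2, hMn]
        field_simp
        ring
      rw [hA]
      refine le_trans (case_ul ((2:ℝ)^n) ((-1:ℝ)^n) x ((Nat.fib n : ℝ)) ((Nat.fib (n-1) : ℝ))
        (((7:ℝ)/4)^n) he hP hm0 hmf hfQ (by linarith) (by linarith) (by linarith)) (le_of_eq (by ring))

      have c2' : 2*x-1 ≤ M (n+1) := le_of_lt (not_le.mp c2)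
      have hhx2 : h (2*x-1) = (Nat.fib n : ℝ) +
          ((Nat.fib (n+1) : ℝ) - (Nat.fib n : ℝ)) * ((2*x-1) - M n) / (M (n+1) - M n) :=
        hlin n (by omega) _ ⟨by linarith, c2'⟩
      have c4' : 4*x-1 ≤ M (n+2) := le_of_lt (not_le.mp c4)
      have hhx4 : h (4*x-1) = (Nat.fib (n+1) : ℝ) +
          ((Nat.fib (n+2) : ℝ) - (Nat.fib (n+1) : ℝ)) * ((4*x-1) - M (n+1)) / (M (n+2) - M (n+1)) :=
        hlin (n+1) (by omega) _ ⟨by linarith, c4'⟩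
      have hA : h (4*x-1) - h (2*x-1) - h x = ((12)*x*(2:ℝ)^n*(2:ℝ)^n*(Nat.fib n : ℝ) + (-18)*x*(2:ℝ)^n*(2:ℝ)^n*(Nat.fib (n-1) : ℝ) + (48)*x*(2:ℝ)^n*(-1:ℝ)^n*(Nat.fib n : ℝ) + (-18)*x*(2:ℝ)^n*(-1:ℝ)^n*(Nat.fib (n-1) : ℝ) + (48)*x*(-1:ℝ)^n*(-1:ℝ)^n*(Nat.fib n : ℝ) + (36)*x*(-1:ℝ)^n*(-1:ℝ)^n*(Nat.fib (n-1) : ℝ) + (-4)*(2:ℝ)^n*(2:ℝ)^n*(2:ℝ)^n*(Nat.fib n : ℝ) + (6)*(2:ℝ)^n*(2:ℝ)^n*(2:ℝ)^n*(Nat.fib (n-1) : ℝ) + (-15)*(2:ℝ)^n*(2:ℝ)^n*(-1:ℝ)^n*(Nat.fib n : ℝ) + (6)*(2:ℝ)^n*(2:ℝ)^n*(-1:ℝ)^n*(Nat.fib (n-1) : ℝ) + (-3)*(2:ℝ)^n*(2:ℝ)^n*(Nat.fib n : ℝ) + (6)*(2:ℝ)^n*(2:ℝ)^n*(Nat.fib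 (n-1) : ℝ) + (-12)*(2:ℝ)^n*(-1:ℝ)^n*(-1:ℝ)^n*(Nat.fib n : ℝ) + (-12)*(2:ℝ)^n*(-1:ℝ)^n*(-1:ℝ)^n*(Nat.fib (n-1) : ℝ) + (-12)*(2:ℝ)^n*(-1:ℝ)^n*(Nat.fib n : ℝ) + (6)*(2:ℝ)^n*(-1:ℝ)^n*(Nat.fib (n-1) : ℝ) + (4)*(-1:ℝ)^n*(-1:ℝ)^n*(-1:ℝ)^n*(Nat.fib n : ℝ) + (-12)*(-1:ℝ)^n*(-1:ℝ)^n*(Nat.fib n : ℝ) + (-12)*(-1:ℝ)^n*(-1:ℝ)^n*(Nat.fib (n-1) : ℝ))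
          / ((2*(2:ℝ)^n-2*(-1:ℝ)^n)*(((2:ℝ)^n+2*(-1:ℝ)^n)*((2:ℝ)^n+2*(-1:ℝ)^n))) := by
        rw [hhx4, hhx2, hhx, hd2, hd1, hf2, hf1, hM1, hMn]
        field_simp
        ring
      rw [hA]
      refine le_trans (case_ll ((2:ℝ)^n) ((-1:ℝ)^n) x ((Nat.fib n : ℝ)) ((Nat.fib (n-1) : ℝ))
        (((7:ℝ)/4)^n) he hP hm0 hmf hfQ (by linarith) (by linarith) (by linarith) (by linarith)) (le_of_eq (by ring))

  rw [Metric.tendsto_atTop]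
  intro ε hε
  have h78 : Filter.Tendsto (fun k : ℕ => (10000:ℝ) * ((7/8:ℝ))^k) Filter.atTop (nhds 0) := by
    have h' := tendsto_pow_atTop_nhds_zero_of_lt_one (by norm_num : (0:ℝ) ≤ 7/8)
      (by norm_num : (7/8:ℝ) < 1)
    simpa using h'.const_mul (10000:ℝ)
  obtain ⟨N0, hN0⟩ := (Metric.tendsto_atTop.mp h78) ε hε
  have hMstep : ∀ k : ℕ, M k ≤ M (k+1) := by
    intro k
    have h1 : (1:ℝ) ≤ 2^k := one_le_pow₀ one_le_two
    rcases Nat.even_or_odd k with hk | hk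
    · have hek : ((-1:ℝ))^k = 1 := hk.neg_one_pow
      have hek1 : ((-1:ℝ))^(k+1) = -1 := (hk.add_one).neg_one_pow
      have h2' : (2:ℝ)^(k+1) = 2*2^k := by ring
      rw [hM, hM, hek, hek1, h2']
      linarith
    · have hek : ((-1:ℝ))^k = -1 := hk.neg_one_pow
      have hek1 : ((-1:ℝ))^(k+1) = 1 := (hk.add_one).neg_one_pow
      have hk1 : 1 ≤ k := by rcases hk with ⟨j, rfl⟩; omega
      have h2' : (2:ℝ)^(k+1) = 2*2^k := by ring
      have h2k : (2:ℝ) ≤ 2^k := by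
        calc (2:ℝ) = 2^1 := (pow_one 2).symm
          _ ≤ 2^k := pow_le_pow_right₀ (by norm_num) hk1
      rw [hM, hM, hek, hek1, h2']
      linarith
  have hMmono : Monotone M := monotone_nat_of_le_succ hMstep
  have hunb : ∀ y : ℝ, ∃ k : ℕ, y < M k := by
    intro y
    obtain ⟨k, hk⟩ := pow_unbounded_of_one_lt (3*y+2) (one_lt_two (α := ℝ))
    refine ⟨k, ?_⟩
    have he' : ((-1:ℝ))^k ≤ 1 := by
      rcases neg_one_pow_eq_or ℝ k with h' | h' <;> rw [h'] <;> norm_num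
    rw [hM]
    linarith
  set N' : ℕ := max N0 4 with hN'def
  refine ⟨M N', fun x hx => ?_⟩
  obtain ⟨k0, hk0⟩ := hunb x
  have hex : ∃ k, x < M k := ⟨k0, hk0⟩
  have hspec : x < M (Nat.find hex) := Nat.find_spec hex
  have hlt : N' < Nat.find hex := by
    by_contra hcon
    push_neg at hcon
    have := hMmono hcon
    linarith
  set n := Nat.find hex - 1 with hdefn
  have hN'4 : 4 ≤ N' := le_max_right _ _
  have hN'0 : N0 ≤ N' := le_max_left _ _
  have hn4 : 4 ≤ n := by omega
  have hnN0 : N0 ≤ n := by omega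
  have hx1 : M n ≤ x := by
    have hmin := Nat.find_min hex (m := n) (by omega)
    exact not_lt.mp hmin
  have hx2 : x ≤ M (n+1) := by
    have heq : n + 1 = Nat.find hex := by omega
    rw [heq]
    exact le_of_lt hspec
  have hb := key n hn4 x hx1 hx2
  have hq : 10000 * (((7:ℝ)/4)^n / (2:ℝ)^n) = 10000 * ((7/8:ℝ))^n := by
    rw [← div_pow]; norm_num
  have hsmall := hN0 n hnN0
  rw [Real.dist_eq, sub_zero] at hsmall
  have hpos : (0:ℝ) ≤ 10000 * ((7/8:ℝ))^n := by positivity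
  rw [abs_of_nonneg hpos] at hsmall
  simp only [Real.dist_eq, sub_zero]
  calc |h (4 * x - 1) - h (2 * x - 1) - h x| ≤ 10000 * (((7:ℝ)/4)^n / (2:ℝ)^n) := hb
    _ = 10000 * ((7/8:ℝ))^n := hq
    _ < ε := hsmall
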